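/- Let X = { (x,y) ∈ ℤ₊² : y ≤ √2·x }. Then conv(X) = { (x,y) ∈ ℝ₊² : y ≤ √2·x } \ { (x,y) : y = √2·x, x > 0 }; that is, the convex hull of X consists of the origin together with all points of the nonnegative quadrant strictly below the line y = √2·x. -/

import Mathlib

open Real

private lemma sqrt2_gt_one : (1:ℝ) < Real.sqrt 2 := by
  nlinarith [Real.sq_sqrt (by norm_num : (2:ℝ) ≥ 0), Real.sqrt_nonneg 2]

/-- The target set, rewritten. -/
private lemma target_eq :
    ({p : ℝ × ℝ | 0 ≤ p.1 ∧ 0 ≤ p.2 ∧ p.2 ≤ Real.sqrt 2 * p.1} \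
        {p : ℝ × ℝ | p.2 = Real.sqrt 2 * p.1 ∧ 0 < p.1}) =
    {p : ℝ × ℝ | 0 ≤ p.1 ∧ 0 ≤ p.2 ∧
      (p.2 < Real.sqrt 2 * p.1 ∨ (p.1 = 0 ∧ p.2 = 0))} := by
  ext ⟨x, y⟩
  simp only [Set.mem_diff, Set.mem_setOf_eq, not_and, not_lt]
  constructor
  · rintro ⟨⟨hx, hy, hle⟩, hne⟩
    refine ⟨hx, hy, ?_⟩
    rcases lt_or_eq_of_le hle with h | h
    · exact Or.inl h
    · have hx0 : x ≤ 0 := hne h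
      have hx0' : x = 0 := le_antisymm hx0 hx
      have hy0 : y = 0 := by
        have := h
        rw [hx0'] at this
        simpa using this
      exact Or.inr ⟨hx0', hy0⟩
  · rintro ⟨hx, hy, h | ⟨h1, h2⟩⟩
    · exact ⟨⟨hx, hy, le_of_lt h⟩, fun he => absurd he (ne_of_lt h)⟩
    · refine ⟨⟨hx, hy, ?_⟩, ?_⟩
      · simp [h1, h2]
      · intro _; simp [h1]

private lemma convex_target :
    Convex ℝ {p : ℝ × ℝ | 0 ≤ p.1 ∧ 0 ≤ p.2 ∧
      (p.2 < Real.sqrt 2 * p.1 ∨ (p.1 = 0 ∧ p.2 = 0))} := by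
  rintro ⟨px, py⟩ ⟨hpx, hpy, hp⟩ ⟨qx, qy⟩ ⟨hqx, hqy, hq⟩ a b ha hb hab
  dsimp only at hpx hpy hp hqx hqy hq
  simp only [Prod.smul_mk, Prod.mk_add_mk, smul_eq_mul, Set.mem_setOf_eq]
  refine ⟨by nlinarith, by nlinarith, ?_⟩
  rcases hp with hp | ⟨hp1, hp2⟩ <;> rcases hq with hq | ⟨hq1, hq2⟩
  · rcases eq_or_lt_of_le ha with ha0 | ha0
    · left; rw [← ha0] at hab ⊢; simp at hab ⊢; rw [hab]; simpa using hq
    rcases eq_or_lt_of_le hb with hb0 | hb0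
    · left; rw [← hb0] at hab ⊢; simp at hab ⊢; rw [hab]; simpa using hp
    left; nlinarith
  · subst hq1; subst hq2
    rcases eq_or_lt_of_le ha with ha0 | ha0
    · right; rw [← ha0]; norm_num
    · left; simp only [mul_zero, add_zero]; nlinarith
  · subst hp1; subst hp2
    rcases eq_or_lt_of_le hb with hb0 | hb0
    · right; rw [← hb0]; norm_num
    · left; simp only [mul_zero, zero_add]; nlinarith
  · right; subst hp1; subst hp2; subst hq1; subst hq2; norm_num

theorem example1_convexHull
    (X : Set (ℝ × ℝ))
    (hX : X = {p : ℝ × ℝ | (∃ a b : ℤ, 0 ≤ a ∧ 0 ≤ b ∧ p = ((a : ℝ), (b : ℝ))) ∧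
      p.2 ≤ Real.sqrt 2 * p.1}) :
    convexHull ℝ X =
      {p : ℝ × ℝ | 0 ≤ p.1 ∧ 0 ≤ p.2 ∧ p.2 ≤ Real.sqrt 2 * p.1} \
        {p : ℝ × ℝ | p.2 = Real.sqrt 2 * p.1 ∧ 0 < p.1} := by
  rw [target_eq]
  apply le_antisymm
  · -- convexHull X ⊆ target
    apply convexHull_min _ convex_target
    rw [hX]
    rintro ⟨x, y⟩ ⟨⟨a, b, ha, hb, hab⟩, hle⟩
    simp only [Prod.mk.injEq] at hab
    obtain ⟨hxa, hyb⟩ := hab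
    subst hxa; subst hyb
    show (0:ℝ) ≤ (a:ℝ) ∧ (0:ℝ) ≤ (b:ℝ) ∧ _
    refine ⟨by exact_mod_cast ha, by exact_mod_cast hb, ?_⟩
    simp only at hle ⊢
    rcases eq_or_lt_of_le ha with ha0 | ha0
    · right
      constructor
      · exact_mod_cast ha0.symm
      · have : (b:ℝ) ≤ 0 := by
          rw [← ha0] at hle; simpa using hle
        have : (b:ℝ) = 0 := le_antisymm this (by exact_mod_cast hb)
        exact this
    · left
      rcases lt_or_eq_of_le hle with h | h
      · exact h
      · exfalso
        have ha0' : (0:ℝ) < a := by exact_mod_cast ha0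
        have : Real.sqrt 2 = (b:ℝ) / (a:ℝ) := by
          field_simp at h ⊢; linarith [h]
        exact irrational_sqrt_two ⟨(b:ℚ)/(a:ℚ), by push_cast [this]; ring⟩
  · -- target ⊆ convexHull X
    rintro ⟨x, y⟩ ⟨hx, hy, h⟩
    simp only at hx hy h
    rcases h with h | ⟨h1, h2⟩
    swap
    · subst h1; subst h2
      apply subset_convexHull
      rw [hX]
      exact ⟨⟨0, 0, le_refl _, le_refl _, by norm_num⟩, by norm_num⟩
    -- strict case: y < √2 x, so x > 0
    have hs2 : (0:ℝ) < Real.sqrt 2 := by linarith [sqrt2_gt_one]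
    have hx0 : 0 < x := by nlinarith
    set c := Real.sqrt 2 * x - y with hc
    have hc0 : 0 < c := by simp [hc]; linarith
    obtain ⟨N, hN⟩ := exists_nat_gt (max (x / c) x)
    have hNx : x < N := lt_of_le_of_lt (le_max_right _ _) hN
    have hNc : x / c < N := lt_of_le_of_lt (le_max_left _ _) hN
    have hN0 : (0:ℝ) < N := lt_trans hx0 hNx
    have hNcx : x < N * c := by
      rw [div_lt_iff₀ hc0] at hNc; linarith
    set m : ℤ := ⌊Real.sqrt 2 * N⌋ with hm
    have hm1 : (m:ℝ) ≤ Real.sqrt 2 * N := Int.floor_le _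
    have hm2 : Real.sqrt 2 * N - 1 < m := Int.sub_one_lt_floor _
    have hm0 : (0:ℝ) < m := by
      have : (1:ℝ) < Real.sqrt 2 * N := by nlinarith [sqrt2_gt_one]
      linarith
    have hm0' : 0 ≤ m := by exact_mod_cast le_of_lt hm0
    -- key: y * N < x * m
    have hkey : y * N < x * m := by nlinarith
    have hC : Convex ℝ (convexHull ℝ X) := convex_convexHull ℝ X
    have hO : ((0:ℝ), (0:ℝ)) ∈ convexHull ℝ X := by
      apply subset_convexHull; rw [hX]
      exact ⟨⟨0, 0, le_refl _, le_refl _, by norm_num⟩, by norm_num⟩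
    have hA : ((N:ℝ), (0:ℝ)) ∈ convexHull ℝ X := by
      apply subset_convexHull; rw [hX]
      refine ⟨⟨(N:ℤ), 0, by positivity, le_refl _, by push_cast; rfl⟩, ?_⟩
      simp only
      positivity
    have hB : ((N:ℝ), (m:ℝ)) ∈ convexHull ℝ X := by
      apply subset_convexHull; rw [hX]
      exact ⟨⟨(N:ℤ), m, by positivity, hm0', by push_cast; rfl⟩, hm1⟩
    set t : ℝ := y * N / (x * m) with ht
    have ht0 : 0 ≤ t := by positivity
    have ht1 : t ≤ 1 := by
      rw [ht, div_le_one (by positivity)]; linarith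
    have hq : ((N:ℝ), t * m) ∈ convexHull ℝ X := by
      have h' := hC hA hB (by linarith : (0:ℝ) ≤ 1 - t) ht0 (by ring)
      simp only [Prod.smul_mk, Prod.mk_add_mk, smul_eq_mul, mul_zero, zero_add] at h'
      rwa [show (1-t)*(N:ℝ)+t*(N:ℝ) = (N:ℝ) from by ring] at h'
    set s : ℝ := x / N with hs
    have hs0 : 0 ≤ s := by positivity
    have hs1 : s ≤ 1 := by rw [hs, div_le_one hN0]; linarith
    have := hC hO hq (by linarith : (0:ℝ) ≤ 1 - s) hs0 (by ring)
    have heq : (1 - s) • ((0:ℝ), (0:ℝ)) + s • ((N:ℝ), t * m) = (x, y) := by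
      simp only [Prod.smul_mk, Prod.mk_add_mk, smul_eq_mul, mul_zero, zero_add,
        Prod.mk.injEq]
      constructor
      · rw [hs]; field_simp
      · rw [hs, ht]; field_simp
    rwa [heq] at this
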